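/- Let T be a compact Hausdorff extremally disconnected space and u : T → K(ℓ²(I)) a map continuous for the operator norm. Then for every integer n ≥ 1, the set U_n(u) := {t ∈ T : θ_n(u(t)) ≠ 0} is the union of a countable family of pairwise disjoint clopen subsets of T. -/

import Mathlib

noncomputable section

abbrev ell2 (I : Type*) : Type _ := lp (fun _ : I => ℂ) 2

/-- `n`-th singular value of an operator: distance to operators of rank `< n`. -/
def sval {F : Type*} [NormedAddCommGroup F] [InnerProductSpace ℂ F] (n : ℕ)
    (a : F →L[ℂ] F) : ℝ :=
  sInf {r : ℝ | ∃ b : F →L[ℂ] F,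
    Module.rank ℂ (LinearMap.range (b : F →ₗ[ℂ] F)) < n ∧ r = ‖a - b‖}

lemma sval_eq_infDist {F : Type*} [NormedAddCommGroup F] [InnerProductSpace ℂ F] (n : ℕ)
    (a : F →L[ℂ] F) :
    sval n a = Metric.infDist a
      {b : F →L[ℂ] F | Module.rank ℂ (LinearMap.range (b : F →ₗ[ℂ] F)) < n} := by
  rw [Metric.infDist_eq_iInf, sval]
  congr 1
  rw [show (Set.range fun y : {b : F →L[ℂ] F |
      Module.rank ℂ (LinearMap.range (b : F →ₗ[ℂ] F)) < n} => dist a (y : F →L[ℂ] F)) =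
      (dist a) '' {b : F →L[ℂ] F | Module.rank ℂ (LinearMap.range (b : F →ₗ[ℂ] F)) < n}
    from (Set.image_eq_range _ _).symm]
  ext r
  simp only [Set.mem_image, Set.mem_setOf_eq]
  constructor
  · rintro ⟨b, hb, rfl⟩; exact ⟨b, hb, (dist_eq_norm a b)⟩
  · rintro ⟨b, hb, rfl⟩; exact ⟨b, hb, (dist_eq_norm a b)⟩

theorem stmt8 {T I : Type*} [TopologicalSpace T] [CompactSpace T] [T2Space T]
    [ExtremallyDisconnected T]
    (u : T → (ell2 I →L[ℂ] ell2 I))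
    (hcpt : ∀ t, IsCompactOperator (⇑(u t)))
    (hcont : Continuous u)
    (n : ℕ) (hn : 1 ≤ n) :
    ∃ V : ℕ → Set T, (∀ k, IsClopen (V k)) ∧
      Pairwise (Function.onFun Disjoint V) ∧
      {t : T | sval n (u t) ≠ 0} = ⋃ k, V k := by
  set S : Set (ell2 I →L[ℂ] ell2 I) :=
    {b | Module.rank ℂ (LinearMap.range (b : ell2 I →ₗ[ℂ] ell2 I)) < n} with hS
  have hS0 : (0 : ell2 I →L[ℂ] ell2 I) ∈ S := by
    show Module.rank ℂ (LinearMap.range ((0 : ell2 I →L[ℂ] ell2 I) : ell2 I →ₗ[ℂ] ell2 I)) < n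
    rw [show ((0 : ell2 I →L[ℂ] ell2 I) : ell2 I →ₗ[ℂ] ell2 I) = 0 from rfl,
      LinearMap.range_zero, rank_bot]
    exact_mod_cast hn
  set f : T → ℝ := fun t => sval n (u t) with hf
  have hfc : Continuous f := by
    have : f = (fun a => Metric.infDist a S) ∘ u := by
      funext t; exact sval_eq_infDist n (u t)
    rw [this]
    exact (Metric.continuous_infDist_pt S).comp hcont
  have hfnn : ∀ t, 0 ≤ f t := fun t => by
    show 0 ≤ sval n (u t)
    rw [sval_eq_infDist]; exact Metric.infDist_nonneg
  -- increasing family of clopen sets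
  set W : ℕ → Set T := fun k => closure {t | (1 : ℝ) / (k + 1) < f t} with hW
  have hWclopen : ∀ k, IsClopen (W k) := fun k =>
    ⟨isClosed_closure,
      ExtremallyDisconnected.open_closure _ (isOpen_lt continuous_const hfc)⟩
  have hWmono : Monotone W := by
    intro j k hjk
    apply closure_mono
    intro t ht
    simp only [Set.mem_setOf_eq] at ht ⊢
    refine lt_of_le_of_lt ?_ ht
    apply one_div_le_one_div_of_le
    · positivity
    · have : (j : ℝ) ≤ k := Nat.cast_le.mpr hjk
      linarith
  have hWsub : ∀ k, W k ⊆ {t | f t ≠ 0} := by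
    intro k
    have h1 : W k ⊆ {t | (1 : ℝ) / (k + 1) ≤ f t} :=
      closure_minimal (fun t ht => le_of_lt (Set.mem_setOf_eq ▸ ht)) (isClosed_le continuous_const hfc)
    intro t ht
    have := h1 ht
    have hpos : (0 : ℝ) < 1 / (k + 1) := by positivity
    exact ne_of_gt (lt_of_lt_of_le hpos this)
  refine ⟨disjointed W, ?_, disjoint_disjointed W, ?_⟩
  · intro k
    cases k with
    | zero => rw [disjointed_zero]; exact hWclopen 0
    | succ m =>
        rw [show m + 1 = Order.succ m from rfl, hWmono.disjointed_succ (not_isMax m)]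
        exact (hWclopen (m + 1)).diff (hWclopen m)
  · rw [iUnion_disjointed]
    apply Set.Subset.antisymm
    · intro t ht
      have hpos : 0 < f t := lt_of_le_of_ne (hfnn t) (Ne.symm ht)
      obtain ⟨k, hk⟩ := exists_nat_one_div_lt hpos
      exact Set.mem_iUnion.mpr ⟨k, subset_closure hk⟩
    · intro t ht
      obtain ⟨k, hk⟩ := Set.mem_iUnion.mp ht
      exact hWsub k hk

end
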